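/- Let ε > 0, let n be an integer, let C be a real constant, and let J ⊆ ℝ be an open interval with x + εn > 0 for all x ∈ J. Let t, t₁ : J → ℝ be twice differentiable functions such that for all x ∈ J: t'(x) > 0, ε(t₁(x) − t(x)) + C > 0, and the chain t₁'(x) = (√(t'(x)) + α(x))² holds, where α(x) = √( (ε(t₁(x) − t(x)) + C) / ((x + εn)(x + ε(n+1))) ). Then for all x ∈ J: t₁'(x) > 0 and t₁''(x)/√(t₁'(x)) + 2√(t₁'(x))/(x + ε(n+1)) = t''(x)/√(t'(x)) + 2√(t'(x))/(x + εn). In other words, I = t_{xx}/√(t_x) + 2√(t_x)/(x + εn) is an n-integral of the chain t_{1x} = (√(t_x) + α)². -/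

import Mathlib

/-- `I = t_{xx}/√t_x + 2√t_x/(x + εn)` is an n-integral of the chain
`t_{1x} = (√t_x + α)²` with `α = √((ε(t₁-t)+C(n))/((x+εn)(x+ε(n+1))))`. -/
theorem stmt_12 (ε : ℝ) (hε : 0 < ε) (n : ℤ) (C : ℝ) (J : Set ℝ)
    (hJ : IsOpen J) (hJc : J.OrdConnected)
    (hJpos : ∀ x ∈ J, 0 < x + ε * (n : ℝ))
    (t t₁ : ℝ → ℝ)
    (ht : ∀ x ∈ J, DifferentiableAt ℝ t x)
    (ht' : ∀ x ∈ J, DifferentiableAt ℝ (deriv t) x)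
    (ht₁ : ∀ x ∈ J, DifferentiableAt ℝ t₁ x)
    (ht₁' : ∀ x ∈ J, DifferentiableAt ℝ (deriv t₁) x)
    (htpos : ∀ x ∈ J, 0 < deriv t x)
    (hCpos : ∀ x ∈ J, 0 < ε * (t₁ x - t x) + C)
    (hchain : ∀ x ∈ J, deriv t₁ x = (Real.sqrt (deriv t x)
      + Real.sqrt ((ε * (t₁ x - t x) + C)
          / ((x + ε * (n : ℝ)) * (x + ε * ((n : ℝ) + 1)))))^2) :
    ∀ x ∈ J, 0 < deriv t₁ x ∧
      deriv (deriv t₁) x / Real.sqrt (deriv t₁ x)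
          + 2 * Real.sqrt (deriv t₁ x) / (x + ε * ((n : ℝ) + 1))
        = deriv (deriv t) x / Real.sqrt (deriv t x)
          + 2 * Real.sqrt (deriv t x) / (x + ε * (n : ℝ)) := by
  intro x hx
  have hxJ : J ∈ nhds x := hJ.mem_nhds hx
  set u : ℝ := deriv t x with hu
  set u' : ℝ := deriv (deriv t) x with hu'
  have hu0 : 0 < u := htpos x hx
  set a : ℝ := x + ε * (n : ℝ) with ha
  have ha0 : 0 < a := hJpos x hx
  set b : ℝ := x + ε * ((n : ℝ) + 1) with hb
  have hba : b = a + ε := by rw [ha, hb]; ring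
  have hb0 : 0 < b := by rw [hba]; linarith
  set P : ℝ := ε * (t₁ x - t x) + C with hP
  have hP0 : 0 < P := hCpos x hx
  set q : ℝ := P / (a * b) with hq
  have hq0 : 0 < q := div_pos hP0 (mul_pos ha0 hb0)
  set s : ℝ := Real.sqrt u with hs
  have hs0 : 0 < s := Real.sqrt_pos.mpr hu0
  set α : ℝ := Real.sqrt q with hα
  have hα0 : 0 < α := Real.sqrt_pos.mpr hq0
  have hs2 : s ^ 2 = u := Real.sq_sqrt hu0.le
  have hα2 : α ^ 2 = q := Real.sq_sqrt hq0.le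
  have hPab : P = α ^ 2 * (a * b) := by
    rw [hα2, hq]
    field_simp
  -- derivative of P
  have hPd : HasDerivAt (fun y => ε * (t₁ y - t y) + C)
      (ε * (deriv t₁ x - deriv t x)) x :=
    (((ht₁ x hx).hasDerivAt.sub (ht x hx).hasDerivAt).const_mul ε).add_const C
  -- derivative of (y+εn)(y+ε(n+1))
  have habd : HasDerivAt (fun y : ℝ => (y + ε * (n : ℝ)) * (y + ε * ((n : ℝ) + 1)))
      (1 * b + a * 1) x :=
    ((hasDerivAt_id x).add_const _).mul ((hasDerivAt_id x).add_const _)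
  have hQd : HasDerivAt
      (fun y => (ε * (t₁ y - t y) + C) / ((y + ε * (n : ℝ)) * (y + ε * ((n : ℝ) + 1))))
      ((ε * (deriv t₁ x - deriv t x) * (a * b) - P * (1 * b + a * 1)) / (a * b) ^ 2) x :=
    hPd.div habd (mul_pos ha0 hb0).ne'
  have hαd : HasDerivAt
      (fun y => Real.sqrt
        ((ε * (t₁ y - t y) + C) / ((y + ε * (n : ℝ)) * (y + ε * ((n : ℝ) + 1)))))
      (((ε * (deriv t₁ x - deriv t x) * (a * b) - P * (1 * b + a * 1)) / (a * b) ^ 2)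
        / (2 * α)) x :=
    hQd.sqrt hq0.ne'
  have hsd : HasDerivAt (fun y => Real.sqrt (deriv t y)) (u' / (2 * s)) x :=
    (ht' x hx).hasDerivAt.sqrt hu0.ne'
  set α' : ℝ := ((ε * (deriv t₁ x - deriv t x) * (a * b) - P * (1 * b + a * 1)) / (a * b) ^ 2)
    / (2 * α) with hα'
  have hvd : HasDerivAt
      (fun y => (Real.sqrt (deriv t y) + Real.sqrt
        ((ε * (t₁ y - t y) + C) / ((y + ε * (n : ℝ)) * (y + ε * ((n : ℝ) + 1)))))^2)
      (2 * (s + α) * (u' / (2 * s) + α')) x := by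
    have := (hsd.fun_add hαd).fun_pow 2
    refine this.congr_deriv ?_
    push_cast
    ring
  -- value of deriv t₁ at x
  have hv : deriv t₁ x = (s + α) ^ 2 := hchain x hx
  have hvpos : 0 < deriv t₁ x := by rw [hv]; positivity
  -- eventual equality
  have hev : deriv t₁ =ᶠ[nhds x] fun y => (Real.sqrt (deriv t y) + Real.sqrt
      ((ε * (t₁ y - t y) + C) / ((y + ε * (n : ℝ)) * (y + ε * ((n : ℝ) + 1)))))^2 :=
    Filter.eventually_of_mem hxJ hchain
  have hv'' : deriv (deriv t₁) x = 2 * (s + α) * (u' / (2 * s) + α') := by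
    rw [hev.deriv_eq, hvd.deriv]
  have hsqrtv : Real.sqrt (deriv t₁ x) = s + α := by
    rw [hv, Real.sqrt_sq (by positivity)]
  refine ⟨hvpos, ?_⟩
  rw [hv'', hsqrtv]
  have hdt : deriv t x = s ^ 2 := by rw [← hu, hs2]
  rw [hα', hv, hdt, hPab, hba]
  have hsα : s + α ≠ 0 := by positivity
  field_simp
  ring
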